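/- Let n ≥ 1, a > 0, and let φ₀ : ℝⁿ → ℝ be a bounded continuous integrable function. Define, for t < 0 and x ∈ ℝⁿ, f(x, t) = (−4πa²t)^{−n/2} ∫_{ℝⁿ} φ₀(η) exp(−‖η − x‖²/(−4a²t)) dη. Then for every x ∈ ℝⁿ, f(x, t) → φ₀(x) as t → 0 from the left, so the solution attains the initial condition f(·, 0) = φ₀. -/

import Mathlib

open MeasureTheory Real Filter Topology

/-- For `n ≥ 1`, `a > 0`, and bounded continuous integrable `φ₀ : ℝⁿ → ℝ`,
the anti-diffusion solution `f(x,t) = (−4πa²t)^{−n/2} ∫ φ₀(η) exp(−‖η−x‖²/(−4a²t)) dη`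
(for `t < 0`) attains the initial condition: for every `x`, `f(x,t) → φ₀(x)` as `t → 0⁻`. -/
theorem antidiffusion_n_dim_initial_condition (n : ℕ) (hn : 1 ≤ n) (a : ℝ) (ha : 0 < a)
    (φ₀ : (Fin n → ℝ) → ℝ)
    (hbdd : ∃ C, ∀ x, |φ₀ x| ≤ C) (hcont : Continuous φ₀) (hint : Integrable φ₀)
    (f : (Fin n → ℝ) → ℝ → ℝ)
    (hf : ∀ x t, t < 0 → f x t =
      (-4 * π * a ^ 2 * t) ^ (-(n : ℝ) / 2) *
        ∫ η : Fin n → ℝ,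
          φ₀ η * Real.exp (-(∑ i, (η i - x i) ^ 2) / (-4 * a ^ 2 * t))) :
    ∀ x : Fin n → ℝ, Tendsto (fun t => f x t) (𝓝[<] (0 : ℝ)) (𝓝 (φ₀ x)) := by
  intro x
  obtain ⟨C, hC⟩ := hbdd
  have hC0 : 0 ≤ C := le_trans (abs_nonneg _) (hC x)
  set s : ℝ → ℝ := fun t => Real.sqrt (-4 * a ^ 2 * t) with hsdef
  -- key change of variables
  have key : ∀ t, t < 0 → f x t = π ^ (-(n : ℝ) / 2) *
      ∫ z : Fin n → ℝ, φ₀ (s t • z + x) * Real.exp (-(∑ i, (z i) ^ 2)) := by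
    intro t ht
    have hc : (0:ℝ) < -4 * a ^ 2 * t := by nlinarith [pow_pos ha 2]
    have hst : 0 < s t := Real.sqrt_pos.2 hc
    have hs2 : s t ^ 2 = -4 * a ^ 2 * t := Real.sq_sqrt hc.le
    rw [hf x t ht]
    have h1 : (∫ η : Fin n → ℝ, φ₀ η * Real.exp (-(∑ i, (η i - x i) ^ 2) / (-4 * a ^ 2 * t)))
        = ∫ y : Fin n → ℝ, φ₀ (y + x) * Real.exp (-(∑ i, (y i) ^ 2) / (-4 * a ^ 2 * t)) := by
      rw [← integral_add_right_eq_self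
        (fun η : Fin n → ℝ => φ₀ η * Real.exp (-(∑ i, (η i - x i) ^ 2) / (-4 * a ^ 2 * t))) x]
      congr 1
      ext y
      simp
    have h2 : (∫ y : Fin n → ℝ, φ₀ (y + x) * Real.exp (-(∑ i, (y i) ^ 2) / (-4 * a ^ 2 * t)))
        = (s t) ^ n * ∫ z : Fin n → ℝ, φ₀ (s t • z + x) * Real.exp (-(∑ i, (z i) ^ 2)) := by
      have := MeasureTheory.Measure.integral_comp_inv_smul_of_nonneg
        (volume : Measure (Fin n → ℝ))
        (fun z : Fin n → ℝ => φ₀ (s t • z + x) * Real.exp (-(∑ i, (z i) ^ 2))) hst.le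
      rw [Module.finrank_fintype_fun_eq_card, Fintype.card_fin, smul_eq_mul] at this
      rw [← this]
      congr 1
      ext y
      have h3 : s t • (s t)⁻¹ • y = y := by
        rw [smul_smul, mul_inv_cancel₀ hst.ne', one_smul]
      show φ₀ (y + x) * Real.exp (-(∑ i, (y i) ^ 2) / (-4 * a ^ 2 * t))
        = φ₀ (s t • (s t)⁻¹ • y + x) * Real.exp (-(∑ i, (((s t)⁻¹ • y) i) ^ 2))
      rw [h3]
      congr 2
      have hterm : ∀ i, (((s t)⁻¹ • y) i) ^ 2 = (y i) ^ 2 / (s t ^ 2) := by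
        intro i
        rw [Pi.smul_apply, smul_eq_mul]
        field_simp
      rw [Finset.sum_congr rfl (fun i _ => hterm i), ← Finset.sum_div, hs2]
      ring
    rw [h1, h2]
    have e0 : -4 * π * a ^ 2 * t = π * (-4 * a ^ 2 * t) := by ring
    rw [e0, Real.mul_rpow pi_pos.le hc.le]
    have e1 : (s t) ^ n = (-4 * a ^ 2 * t) ^ ((n : ℝ) / 2) := by
      show Real.sqrt (-4 * a ^ 2 * t) ^ n = _
      rw [Real.sqrt_eq_rpow, ← Real.rpow_natCast ((-4 * a ^ 2 * t) ^ ((1:ℝ) / 2)) n,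
        ← Real.rpow_mul hc.le]
      congr 1
      ring
    have e2 : (-4 * a ^ 2 * t) ^ (-(n : ℝ) / 2) * (-4 * a ^ 2 * t) ^ ((n : ℝ) / 2) = 1 := by
      rw [← Real.rpow_add hc, neg_div, neg_add_cancel, Real.rpow_zero]
    rw [e1]
    rw [show π ^ (-(n : ℝ) / 2) * (-4 * a ^ 2 * t) ^ (-(n : ℝ) / 2) *
        ((-4 * a ^ 2 * t) ^ ((n : ℝ) / 2) * ∫ z : Fin n → ℝ, φ₀ (s t • z + x) *
          Real.exp (-(∑ i, (z i) ^ 2)))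
      = π ^ (-(n : ℝ) / 2) * (((-4 * a ^ 2 * t) ^ (-(n : ℝ) / 2) *
          (-4 * a ^ 2 * t) ^ ((n : ℝ) / 2)) * ∫ z : Fin n → ℝ, φ₀ (s t • z + x) *
          Real.exp (-(∑ i, (z i) ^ 2))) by ring, e2, one_mul]
  -- limit of s
  have hscont : Continuous s := Real.continuous_sqrt.comp (by continuity)
  have hs0 : Tendsto s (𝓝[<] (0:ℝ)) (𝓝 0) := by
    have h := hscont.tendsto 0
    have : s 0 = 0 := by simp [hsdef]
    rw [this] at h
    exact h.mono_left nhdsWithin_le_nhds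
  -- gaussian integrable
  have hexp_eq : (fun z : Fin n → ℝ => Real.exp (-(∑ i, (z i) ^ 2)))
      = fun z => ∏ i, Real.exp (-((z i) ^ 2)) := by
    funext z
    rw [show -(∑ i, (z i) ^ 2) = ∑ i, -((z i) ^ 2) by simp, Real.exp_sum]
  have hg1 : Integrable (fun u : ℝ => Real.exp (-(u ^ 2))) := by
    simpa using integrable_exp_neg_mul_sq (one_pos)
  have hgint : Integrable (fun z : Fin n → ℝ => Real.exp (-(∑ i, (z i) ^ 2))) := by
    rw [hexp_eq]
    exact Integrable.fintype_prod (fun _ => hg1)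
  -- DCT
  have htend : Tendsto (fun t => ∫ z : Fin n → ℝ, φ₀ (s t • z + x) *
        Real.exp (-(∑ i, (z i) ^ 2))) (𝓝[<] (0:ℝ))
      (𝓝 (∫ z : Fin n → ℝ, φ₀ x * Real.exp (-(∑ i, (z i) ^ 2)))) := by
    apply tendsto_integral_filter_of_dominated_convergence
      (fun z : Fin n → ℝ => C * Real.exp (-(∑ i, (z i) ^ 2)))
    · filter_upwards with t
      exact ((hcont.comp (((continuous_const : Continuous fun _ : Fin n → ℝ => s t).smul continuous_id).add continuous_const)).mul
        (Real.continuous_exp.comp (f := fun z : Fin n → ℝ => -(∑ i, (z i) ^ 2)) (by fun_prop))).aestronglyMeasurable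
    · filter_upwards with t
      filter_upwards with z
      rw [norm_mul, Real.norm_eq_abs, Real.norm_eq_abs, Real.abs_exp]
      exact mul_le_mul_of_nonneg_right (hC _) (Real.exp_pos _).le
    · exact hgint.const_mul C
    · filter_upwards with z
      have h1 : Tendsto (fun t => s t • z + x) (𝓝[<] (0:ℝ)) (𝓝 ((0:ℝ) • z + x)) :=
        (hs0.smul_const z).add_const x
      rw [zero_smul, zero_add] at h1
      exact ((hcont.tendsto x).comp h1).mul_const _
  -- compute the limit value
  have hval : (∫ z : Fin n → ℝ, φ₀ x * Real.exp (-(∑ i, (z i) ^ 2)))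
      = φ₀ x * (Real.sqrt π) ^ n := by
    rw [integral_const_mul]
    congr 1
    rw [hexp_eq, volume_pi, integral_fintype_prod_eq_pow (ι := Fin n) (fun u : ℝ => Real.exp (-(u ^ 2)))]
    rw [show (∫ u : ℝ, Real.exp (-(u ^ 2))) = Real.sqrt π by
      simpa using integral_gaussian 1]
    simp
  have hfin : π ^ (-(n : ℝ) / 2) * (φ₀ x * (Real.sqrt π) ^ n) = φ₀ x := by
    have e1 : (Real.sqrt π) ^ n = π ^ ((n : ℝ) / 2) := by
      rw [Real.sqrt_eq_rpow, ← Real.rpow_natCast (π ^ ((1:ℝ) / 2)) n, ← Real.rpow_mul pi_pos.le]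
      congr 1
      ring
    rw [e1, show π ^ (-(n : ℝ) / 2) * (φ₀ x * π ^ ((n : ℝ) / 2))
      = (π ^ (-(n : ℝ) / 2) * π ^ ((n : ℝ) / 2)) * φ₀ x by ring, ← Real.rpow_add pi_pos,
      neg_div, neg_add_cancel, Real.rpow_zero, one_mul]
  have hmain : Tendsto (fun t => π ^ (-(n : ℝ) / 2) *
      ∫ z : Fin n → ℝ, φ₀ (s t • z + x) * Real.exp (-(∑ i, (z i) ^ 2)))
      (𝓝[<] (0:ℝ)) (𝓝 (φ₀ x)) := by
    have := htend.const_mul (π ^ (-(n : ℝ) / 2))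
    rw [hval, hfin] at this
    exact this
  apply hmain.congr'
  filter_upwards [self_mem_nhdsWithin] with t ht
  exact (key t ht).symm
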